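/- Let ψ(t) = t^2/(t+1). For each r ≥ 0 there exists a monic polynomial g_r(t) ∈ ℤ[t] of degree 2^r such that ψ^(r+1)(t) - ψ^(r)(t) = - t^(2^r) / g_r(t) as rational functions, with g_0(t) = t + 1. -/

import Mathlib

/-- The iterates of the rational function ψ(t) = t²/(t+1), as elements of ℚ(t):
`psiIter r` is ψ⁽ʳ⁾(t), with `psiIter 0 = t`. -/
noncomputable def psiIter : ℕ → RatFunc ℚ
  | 0 => RatFunc.X
  | r + 1 => (psiIter r) ^ 2 / (psiIter r + 1)

noncomputable def hAux : ℕ → Polynomial ℤ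
  | 0 => 1
  | r + 1 => hAux r * (Polynomial.X ^ (2 ^ r) + hAux r)

lemma hAux_monic_deg : ∀ r, (hAux r).Monic ∧ (hAux r).natDegree = 2 ^ r - 1 := by
  intro r
  induction r with
  | zero => exact ⟨Polynomial.monic_one, by simp [hAux]⟩
  | succ r ih =>
    obtain ⟨hm, hd⟩ := ih
    have hdeg : (hAux r).degree < (Polynomial.X ^ (2 ^ r) : Polynomial ℤ).degree := by
      rw [Polynomial.degree_X_pow, Polynomial.degree_eq_natDegree hm.ne_zero, hd]
      exact_mod_cast Nat.sub_lt (Nat.pow_pos (by norm_num)) one_pos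
    have hg : (Polynomial.X ^ (2 ^ r) + hAux r : Polynomial ℤ).Monic :=
      (Polynomial.monic_X_pow _).add_of_left hdeg
    have hgd : (Polynomial.X ^ (2 ^ r) + hAux r : Polynomial ℤ).natDegree = 2 ^ r := by
      have := Polynomial.degree_add_eq_left_of_degree_lt hdeg
      rw [Polynomial.degree_X_pow] at this
      exact Polynomial.natDegree_eq_of_degree_eq_some this
    refine ⟨hm.mul hg, ?_⟩
    rw [show hAux (r+1) = hAux r * (Polynomial.X ^ (2 ^ r) + hAux r) from rfl,
      Polynomial.natDegree_mul hm.ne_zero hg.ne_zero, hd, hgd]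
    have h1 : 1 ≤ 2 ^ r := Nat.one_le_two_pow
    rw [pow_succ]; omega

lemma g_monic_deg (r : ℕ) :
    (Polynomial.X ^ (2 ^ r) + hAux r : Polynomial ℤ).Monic ∧
      (Polynomial.X ^ (2 ^ r) + hAux r : Polynomial ℤ).natDegree = 2 ^ r := by
  obtain ⟨hm, hd⟩ := hAux_monic_deg r
  have hdeg : (hAux r).degree < (Polynomial.X ^ (2 ^ r) : Polynomial ℤ).degree := by
    rw [Polynomial.degree_X_pow, Polynomial.degree_eq_natDegree hm.ne_zero, hd]
    exact_mod_cast Nat.sub_lt (Nat.pow_pos (by norm_num)) one_pos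
  refine ⟨(Polynomial.monic_X_pow _).add_of_left hdeg, ?_⟩
  have := Polynomial.degree_add_eq_left_of_degree_lt hdeg
  rw [Polynomial.degree_X_pow] at this
  exact Polynomial.natDegree_eq_of_degree_eq_some this

noncomputable abbrev Pmap : Polynomial ℚ →+* RatFunc ℚ := algebraMap (Polynomial ℚ) (RatFunc ℚ)

lemma Pmap_ne_zero {p : Polynomial ℤ} (hp : p.Monic) :
    Pmap (p.map (Int.castRingHom ℚ)) ≠ 0 := by
  have : (p.map (Int.castRingHom ℚ)) ≠ 0 := (hp.map _).ne_zero
  simpa [FaithfulSMul.algebraMap_eq_zero_iff] using this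

lemma psiIter_eq (r : ℕ) :
    psiIter r = RatFunc.X ^ (2 ^ r) / Pmap ((hAux r).map (Int.castRingHom ℚ)) := by
  induction r with
  | zero => simp [psiIter, hAux]
  | succ r ih =>
    have hm := (hAux_monic_deg r).1
    have hgm := (g_monic_deg r).1
    have hH : Pmap ((hAux r).map (Int.castRingHom ℚ)) ≠ 0 := Pmap_ne_zero hm
    have hG : Pmap (((Polynomial.X ^ (2 ^ r) + hAux r : Polynomial ℤ)).map (Int.castRingHom ℚ)) ≠ 0 :=
      Pmap_ne_zero hgm
    have hXp : (RatFunc.X : RatFunc ℚ) ^ (2 ^ r) = Pmap (Polynomial.X ^ (2 ^ r)) := by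
      simp [RatFunc.algebraMap_X]
    rw [show psiIter (r+1) = (psiIter r) ^ 2 / (psiIter r + 1) from rfl, ih]
    rw [show hAux (r+1) = hAux r * (Polynomial.X ^ (2 ^ r) + hAux r) from rfl]
    rw [Polynomial.map_mul, Polynomial.map_add, map_mul]
    simp only [Polynomial.map_add, Polynomial.map_pow, Polynomial.map_X, map_add, map_pow,
      RatFunc.algebraMap_X] at hG ⊢
    field_simp
    ring_nf

theorem psi_iterate_difference :
    ∃ g : ℕ → Polynomial ℤ, g 0 = Polynomial.X + 1 ∧
      ∀ r : ℕ, (g r).Monic ∧ (g r).natDegree = 2 ^ r ∧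
        psiIter (r + 1) - psiIter r =
          - (RatFunc.X ^ (2 ^ r)) /
            algebraMap (Polynomial ℚ) (RatFunc ℚ)
              ((g r).map (Int.castRingHom ℚ)) := by
  refine ⟨fun r => Polynomial.X ^ (2 ^ r) + hAux r, by simp [hAux], fun r => ?_⟩
  refine ⟨(g_monic_deg r).1, (g_monic_deg r).2, ?_⟩
  have hm := (hAux_monic_deg r).1
  have hH : Pmap ((hAux r).map (Int.castRingHom ℚ)) ≠ 0 := Pmap_ne_zero hm
  have hG : Pmap (((Polynomial.X ^ (2 ^ r) + hAux r : Polynomial ℤ)).map (Int.castRingHom ℚ)) ≠ 0 :=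
    Pmap_ne_zero (g_monic_deg r).1
  rw [psiIter_eq r, psiIter_eq (r+1),
    show hAux (r+1) = hAux r * (Polynomial.X ^ (2 ^ r) + hAux r) from rfl] at *
  simp only [Polynomial.map_mul, Polynomial.map_add, Polynomial.map_pow, Polynomial.map_X,
    map_mul, map_add, map_pow, RatFunc.algebraMap_X] at *
  field_simp
  ring_nf
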